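/- For every U ∈ ℕ there exists a function g_U : ℂ × (ℂ \ (−∞, −1]) → ℂ, holomorphic in each variable, such that for all s ∈ ℂ and all z ∈ ℂ \ (−∞, −1] one has (1 + z)^s = ∑_{u=0}^{U} (s choose u) z^u + z^{U+1} g_U(s, z), and moreover g_U(k, z) = 0 for every integer k with 0 ≤ k ≤ U and every z ∈ ℂ \ (−∞, −1]. -/

import Mathlib

open Complex

/-- The slit plane `ℂ \ (-∞, -1]`. -/
def slitRegion : Set ℂ := {z : ℂ | ¬ (z.im = 0 ∧ z.re ≤ -1)}

/-- Generalized binomial coefficient `s(s-1)⋯(s-u+1)/u!`. -/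
noncomputable def genBinom (s : ℂ) (u : ℕ) : ℂ :=
  (∏ i ∈ Finset.range u, (s - (i : ℂ))) / (Nat.factorial u : ℂ)

lemma isOpen_slitRegion : IsOpen slitRegion := by
  have : slitRegion = ({z : ℂ | z.im = 0} ∩ {z : ℂ | z.re ≤ -1})ᶜ := by
    ext z; simp [slitRegion, Set.mem_inter_iff]
  rw [this]
  exact (IsClosed.inter (isClosed_eq continuous_im continuous_const)
    (isClosed_le continuous_re continuous_const)).isOpen_compl

lemma zero_mem_slit : (0 : ℂ) ∈ slitRegion := by simp [slitRegion]

lemma slit_cond {z : ℂ} (hz : z ∈ slitRegion) : 0 < (1 + z).re ∨ (1 + z).im ≠ 0 := by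
  simp only [slitRegion, Set.mem_setOf_eq, not_and, not_le] at hz
  by_cases h : z.im = 0
  · left; simp [Complex.add_re]; linarith [hz h]
  · right; simpa [Complex.add_im] using h

lemma one_add_ne {z : ℂ} (hz : z ∈ slitRegion) : (1 : ℂ) + z ≠ 0 := by
  intro h
  rcases slit_cond hz with h' | h' <;> rw [h] at h' <;> simp at h'

lemma hasDerivAt_F (s : ℂ) {z : ℂ} (hz : z ∈ slitRegion) :
    HasDerivAt (fun w : ℂ => (1 + w) ^ s) (s * (1 + z) ^ (s - 1)) z := by
  simpa using (HasDerivAt.cpow_const ((hasDerivAt_id z).const_add 1) (slit_cond hz))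

lemma diffOn_F (s : ℂ) : DifferentiableOn ℂ (fun w : ℂ => (1 + w) ^ s) slitRegion :=
  fun z hz => ((hasDerivAt_F s hz).differentiableAt).differentiableWithinAt

lemma analyticAt_F (s : ℂ) : AnalyticAt ℂ (fun w : ℂ => (1 + w) ^ s) 0 :=
  (diffOn_F s).analyticAt (isOpen_slitRegion.mem_nhds zero_mem_slit)

lemma iteratedDeriv_F (s : ℂ) (n : ℕ) : ∀ z ∈ slitRegion,
    iteratedDeriv n (fun w : ℂ => (1 + w) ^ s) z
      = (∏ i ∈ Finset.range n, (s - (i : ℂ))) * (1 + z) ^ (s - n) := by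
  induction n with
  | zero => intro z hz; simp [iteratedDeriv_zero]
  | succ n ih =>
    intro z hz
    rw [iteratedDeriv_succ]
    have hev : iteratedDeriv n (fun w : ℂ => (1 + w) ^ s)
        =ᶠ[nhds z] fun w => (∏ i ∈ Finset.range n, (s - (i : ℂ))) * (1 + w) ^ (s - n) := by
      filter_upwards [isOpen_slitRegion.mem_nhds hz] with w hw using ih w hw
    rw [hev.deriv_eq]
    have hd : HasDerivAt (fun w : ℂ => (1 + w) ^ (s - n))
        ((s - n) * (1 + z) ^ (s - n - 1)) z := by
      simpa using (HasDerivAt.cpow_const ((hasDerivAt_id z).const_add 1) (slit_cond hz))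
    rw [(hd.const_mul _).deriv]
    rw [Finset.prod_range_succ]
    push_cast
    rw [show s - ((n : ℂ) + 1) = s - (n : ℂ) - 1 by ring]
    ring

lemma iterValue (s : ℂ) (n : ℕ) :
    (Function.swap dslope 0)^[n] (fun w : ℂ => (1 + w) ^ s) 0 = genBinom s n := by
  obtain ⟨p, hp⟩ := analyticAt_F s
  have h1 := hp.has_fpower_series_iterate_dslope_fslope n
  have h2 : (Function.swap dslope 0)^[n] (fun w : ℂ => (1 + w) ^ s) 0
      = (FormalMultilinearSeries.fslope^[n] p).coeff 0 := (h1.coeff_zero _).symm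
  rw [h2, FormalMultilinearSeries.coeff_iterate_fslope, zero_add]
  obtain ⟨r, hball⟩ := hp
  have h3 := hball.factorial_smul 1 n
  rw [← iteratedDeriv_eq_iteratedFDeriv, iteratedDeriv_F s n 0 zero_mem_slit] at h3
  have h5 : (n.factorial : ℂ) * p.coeff n = ∏ i ∈ Finset.range n, (s - (i : ℂ)) := by
    rw [show ((1:ℂ) + 0) = 1 by ring, Complex.one_cpow, mul_one] at h3
    rw [← h3, FormalMultilinearSeries.coeff, nsmul_eq_mul]
    norm_num
  have hne : (n.factorial : ℂ) ≠ 0 := by exact_mod_cast n.factorial_ne_zero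
  rw [genBinom, eq_div_iff hne]
  linear_combination h5

lemma expand (n : ℕ) : ∀ (f : ℂ → ℂ) (z : ℂ),
    f z = (∑ u ∈ Finset.range n, ((Function.swap dslope 0)^[u] f 0) * z ^ u)
      + z ^ n * ((Function.swap dslope 0)^[n] f z) := by
  induction n with
  | zero => intro f z; simp
  | succ n ih =>
    intro f z
    have key : f z = f 0 + z * dslope f 0 z := by
      have h := sub_smul_dslope f 0 z
      simp only [sub_zero, smul_eq_mul] at h
      linear_combination -h
    have h2 := ih (dslope f 0) z
    calc f z = f 0 + z * dslope f 0 z := key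
    _ = f 0 + z * ((∑ u ∈ Finset.range n, ((Function.swap dslope 0)^[u] (dslope f 0) 0) * z ^ u)
          + z ^ n * ((Function.swap dslope 0)^[n] (dslope f 0) z)) := by rw [← h2]
    _ = _ := by
        rw [Finset.sum_range_succ']
        simp only [Function.iterate_succ_apply, Function.iterate_zero_apply, Function.swap,
          pow_zero, mul_one]
        rw [mul_add, Finset.mul_sum]
        rw [Finset.sum_congr rfl (fun u _ => by ring :
          ∀ u ∈ Finset.range n, z * ((Function.swap dslope 0)^[u] (dslope f 0) 0 * z ^ u)
            = (Function.swap dslope 0)^[u] (dslope f 0) 0 * z ^ (u + 1))]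
        ring

lemma diffOn_iter (s : ℂ) (n : ℕ) :
    DifferentiableOn ℂ ((Function.swap dslope 0)^[n] (fun w : ℂ => (1 + w) ^ s)) slitRegion := by
  obtain ⟨p, hp⟩ := analyticAt_F s
  have hA : ∀ m, AnalyticAt ℂ ((Function.swap dslope 0)^[m] (fun w : ℂ => (1 + w) ^ s)) 0 :=
    fun m => (hp.has_fpower_series_iterate_dslope_fslope m).analyticAt
  induction n with
  | zero => exact diffOn_F s
  | succ n ih =>
    rw [Function.iterate_succ_apply']
    intro x hx
    rcases eq_or_ne x 0 with rfl | hne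
    · have := (hA (n + 1)).differentiableAt
      rw [Function.iterate_succ_apply'] at this
      exact this.differentiableWithinAt
    · exact (differentiableWithinAt_dslope_of_ne hne).2 (ih x hx)

lemma genBinom_natCast (k u : ℕ) : genBinom (k : ℂ) u = (k.choose u : ℂ) := by
  rcases le_or_gt u k with h | h
  · have hprod : ∏ i ∈ Finset.range u, ((k : ℂ) - (i : ℂ)) = (k.descFactorial u : ℂ) := by
      rw [Nat.descFactorial_eq_prod_range, Nat.cast_prod]
      refine Finset.prod_congr rfl fun i hi => ?_
      exact (Nat.cast_sub (le_of_lt (lt_of_lt_of_le (Finset.mem_range.1 hi) h))).symm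
    rw [genBinom, hprod, Nat.descFactorial_eq_factorial_mul_choose]
    push_cast
    rw [mul_comm, mul_div_assoc, div_self (by exact_mod_cast u.factorial_ne_zero), mul_one]
  · rw [genBinom, Finset.prod_eq_zero (Finset.mem_range.2 h) (by simp), zero_div,
      Nat.choose_eq_zero_of_lt h, Nat.cast_zero]

lemma diff_genBinom (u : ℕ) : Differentiable ℂ fun s : ℂ => genBinom s u := by
  have h : Differentiable ℂ fun s : ℂ => ∏ i ∈ Finset.range u, (s - (i : ℂ)) := by
    induction u with
    | zero => simpa using differentiable_const 1
    | succ n ih =>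
      simp only [Finset.prod_range_succ]
      exact ih.mul (differentiable_id.sub_const _)
  exact h.div_const _

theorem binomial_remainder (U : ℕ) :
    ∃ g : ℂ → ℂ → ℂ,
      (∀ z ∈ slitRegion, Differentiable ℂ (fun s => g s z)) ∧
      (∀ s : ℂ, DifferentiableOn ℂ (fun z => g s z) slitRegion) ∧
      (∀ (s : ℂ), ∀ z ∈ slitRegion,
        (1 + z) ^ s =
          (∑ u ∈ Finset.range (U + 1), genBinom s u * z ^ u) +
            z ^ (U + 1) * g s z) ∧
      (∀ k : ℕ, k ≤ U → ∀ z ∈ slitRegion, g (k : ℂ) z = 0) := by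
  refine ⟨fun s z => (Function.swap dslope 0)^[U + 1] (fun w : ℂ => (1 + w) ^ s) z,
    ?_, ?_, ?_, ?_⟩
  case refine_3 =>
    intro s z _
    have h := expand (U + 1) (fun w : ℂ => (1 + w) ^ s) z
    simp only [iterValue] at h
    exact h
  case refine_1 =>
    intro z hz s'
    rcases eq_or_ne z 0 with rfl | hne
    · have : (fun s : ℂ => (Function.swap dslope 0)^[U + 1] (fun w : ℂ => (1 + w) ^ s) 0)
          = fun s => genBinom s (U + 1) := funext fun s => iterValue s (U + 1)
      rw [this]
      exact diff_genBinom (U + 1) s'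
    · have hz1 : (1 : ℂ) + z ≠ 0 := one_add_ne hz
      have hzp : z ^ (U + 1) ≠ 0 := pow_ne_zero _ hne
      have heq : (fun s : ℂ => (Function.swap dslope 0)^[U + 1] (fun w : ℂ => (1 + w) ^ s) z)
          = fun s => ((1 + z) ^ s - ∑ u ∈ Finset.range (U + 1), genBinom s u * z ^ u)
              / z ^ (U + 1) := by
        funext s
        have h := expand (U + 1) (fun w : ℂ => (1 + w) ^ s) z
        simp only [iterValue] at h
        rw [eq_div_iff hzp]
        linear_combination -h
      rw [heq]
      exact (((differentiable_id.const_cpow (Or.inl hz1)).sub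
        (Differentiable.fun_sum fun u _ => (diff_genBinom u).mul_const _)).div_const _) s'
  case refine_2 =>
    intro s
    exact diffOn_iter s (U + 1)
  case refine_4 =>
    intro k hk z hz
    rcases eq_or_ne z 0 with rfl | hne
    · show (Function.swap dslope 0)^[U + 1] (fun w : ℂ => (1 + w) ^ (k : ℂ)) 0 = 0
      rw [iterValue, genBinom,
        Finset.prod_eq_zero (Finset.mem_range.2 (Nat.lt_succ_of_le hk)) (by simp), zero_div]
    · have h := expand (U + 1) (fun w : ℂ => (1 + w) ^ (k : ℂ)) z
      simp only [iterValue] at h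
      have hpoly : (1 + z) ^ (k : ℂ)
          = ∑ u ∈ Finset.range (U + 1), genBinom (k : ℂ) u * z ^ u := by
        rw [cpow_natCast]
        have h1 : (1 + z) ^ k = ∑ m ∈ Finset.range (k + 1), (k.choose m : ℂ) * z ^ m := by
          rw [add_comm, add_pow]
          refine Finset.sum_congr rfl fun m _ => by ring
        have h2 : ∑ m ∈ Finset.range (k + 1), (k.choose m : ℂ) * z ^ m
            = ∑ m ∈ Finset.range (U + 1), (k.choose m : ℂ) * z ^ m := by
          refine Finset.sum_subset (Finset.range_subset_range.2 (by omega)) fun m _ hm => ?_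
          have : k < m := lt_of_not_ge fun hle => hm (Finset.mem_range.2 (by omega))
          rw [Nat.choose_eq_zero_of_lt this, Nat.cast_zero, zero_mul]
        rw [h1, h2]
        exact Finset.sum_congr rfl fun u _ => by rw [genBinom_natCast]
      rw [hpoly] at h
      have h0 : z ^ (U + 1) * (Function.swap dslope 0)^[U + 1]
          (fun w : ℂ => (1 + w) ^ (k : ℂ)) z = 0 := (left_eq_add.mp h)
      rcases mul_eq_zero.mp h0 with h' | h'
      · exact absurd h' (pow_ne_zero _ hne)
      · exact h'
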